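/- arXiv:2207.13877 — 2 statements merged into one kernel-verified Lean document; each statement's English description precedes it below -/
import Mathlib

section
/- Let Q and P be probability distributions on the finite set {0,1}^n with P(v) > 0 for all v, and suppose the Kullback–Leibler divergence KL(Q ∣ P) = Σ_v Q(v) ln(Q(v)/P(v)) is strictly positive. Then there exists a vector ŵ ∈ R^n such that Σ_v exp(⟨ŵ, v⟩) (P(v) - Q(v)) < 0. -/
open Finset Real

theorem exists_weight_vector_negative_correlation (n : ℕ)
    (Q P : (Fin n → Bool) → ℝ)
    (hQ0 : ∀ v, 0 ≤ Q v) (hQ1 : ∑ v : Fin n → Bool, Q v = 1)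
    (hP0 : ∀ v, 0 < P v) (hP1 : ∑ v : Fin n → Bool, P v = 1)
    (hKL : 0 < ∑ v : Fin n → Bool, Q v * Real.log (Q v / P v)) :
    ∃ w : Fin n → ℝ,
      ∑ v : Fin n → Bool,
        Real.exp (∑ k, w k * (if v k then (1 : ℝ) else 0)) * (P v - Q v) < 0 := by
  -- Step 1: find v̂ with P v̂ < Q v̂
  have hex : ∃ v, P v < Q v := by
    by_contra h
    push_neg at h
    have hPQ : ∀ v, Q v = P v := by
      have hzero : ∑ v : Fin n → Bool, (P v - Q v) = 0 := by
        rw [Finset.sum_sub_distrib, hP1, hQ1]; ring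
      intro v
      have := (Finset.sum_eq_zero_iff_of_nonneg
        (fun v _ => sub_nonneg.mpr (h v))).mp hzero v (Finset.mem_univ v)
      linarith
    have hz : ∑ v : Fin n → Bool, Q v * Real.log (Q v / P v) = 0 := by
      apply Finset.sum_eq_zero
      intro v _
      rw [hPQ v, div_self (hP0 v).ne', Real.log_one, mul_zero]
    linarith
  obtain ⟨vh, hvh⟩ := hex
  set ε := Q vh - P vh with hεdef
  have hεpos : 0 < ε := by linarith
  set α := |Real.log (2 / ε)| with hαdef
  have hα0 : 0 ≤ α := abs_nonneg _
  have hexpα : Real.exp (-α) ≤ ε / 2 := by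
    have h1 : -α ≤ Real.log (ε / 2) := by
      have : Real.log (ε / 2) = -Real.log (2 / ε) := by
        rw [← Real.log_inv]
        congr 1
        field_simp
      rw [this]
      exact neg_le_neg (le_abs_self _)
    calc Real.exp (-α) ≤ Real.exp (Real.log (ε / 2)) := Real.exp_le_exp.mpr h1
      _ = ε / 2 := Real.exp_log (by positivity)
  refine ⟨fun k => if vh k then α else -α, ?_⟩
  set w : Fin n → ℝ := fun k => if vh k then α else -α with hwdef
  set S : (Fin n → Bool) → ℝ := fun v => ∑ k, w k * (if v k then (1 : ℝ) else 0) with hSdef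
  -- Step 2: S v + α ≤ S vh for v ≠ vh
  have hSle : ∀ v : Fin n → Bool, v ≠ vh → S v + α ≤ S vh := by
    intro v hv
    have hdiff : ∃ k, v k ≠ vh k := by
      by_contra h
      push_neg at h
      exact hv (funext h)
    obtain ⟨k0, hk0⟩ := hdiff
    have key : α ≤ ∑ k, (w k * (if vh k then (1 : ℝ) else 0) - w k * (if v k then (1 : ℝ) else 0)) := by
      have hnn : ∀ k ∈ (Finset.univ : Finset (Fin n)),
          0 ≤ w k * (if vh k then (1 : ℝ) else 0) - w k * (if v k then (1 : ℝ) else 0) := by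
        intro k _
        simp only [hwdef]
        cases hvk : vh k <;> cases hvk' : v k <;> simp <;> linarith
      have hk0' : α ≤ w k0 * (if vh k0 then (1 : ℝ) else 0) - w k0 * (if v k0 then (1 : ℝ) else 0) := by
        simp only [hwdef]
        cases hvk : vh k0 <;> cases hvk' : v k0 <;> simp_all
      calc α ≤ _ := hk0'
        _ ≤ _ := Finset.single_le_sum hnn (Finset.mem_univ k0)
    have : ∑ k, (w k * (if vh k then (1 : ℝ) else 0) - w k * (if v k then (1 : ℝ) else 0))
        = S vh - S v := by
      rw [hSdef]
      simp [Finset.sum_sub_distrib]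
    linarith [key, this ▸ key]
  -- Step 3: bound each term
  have hterm : ∀ v : Fin n → Bool, v ≠ vh →
      Real.exp (S v) * (P v - Q v) ≤ Real.exp (S vh) * (ε / 2) * P v := by
    intro v hv
    have hSv : Real.exp (S v) ≤ Real.exp (S vh) * (ε / 2) := by
      calc Real.exp (S v) ≤ Real.exp (S vh - α) :=
            Real.exp_le_exp.mpr (by linarith [hSle v hv])
        _ = Real.exp (S vh) * Real.exp (-α) := by rw [← Real.exp_add]; ring_nf
        _ ≤ Real.exp (S vh) * (ε / 2) := by
            exact mul_le_mul_of_nonneg_left hexpα (Real.exp_nonneg _)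
    calc Real.exp (S v) * (P v - Q v) ≤ Real.exp (S v) * P v := by
          exact mul_le_mul_of_nonneg_left (by linarith [hQ0 v]) (Real.exp_nonneg _)
      _ ≤ Real.exp (S vh) * (ε / 2) * P v :=
          mul_le_mul_of_nonneg_right hSv (hP0 v).le
  -- Step 4: sum bound
  have hsplit : ∑ v : Fin n → Bool, Real.exp (S v) * (P v - Q v)
      = Real.exp (S vh) * (P vh - Q vh)
        + ∑ v ∈ (Finset.univ : Finset (Fin n → Bool)).erase vh, Real.exp (S v) * (P v - Q v) := by
    rw [← Finset.add_sum_erase _ _ (Finset.mem_univ vh)]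
  have hrest : ∑ v ∈ (Finset.univ : Finset (Fin n → Bool)).erase vh, Real.exp (S v) * (P v - Q v)
      ≤ Real.exp (S vh) * (ε / 2) * ∑ v ∈ (Finset.univ : Finset (Fin n → Bool)).erase vh, P v := by
    rw [Finset.mul_sum]
    apply Finset.sum_le_sum
    intro v hv
    exact hterm v (Finset.ne_of_mem_erase hv)
  have hPsum : ∑ v ∈ (Finset.univ : Finset (Fin n → Bool)).erase vh, P v ≤ 1 := by
    have := Finset.add_sum_erase (Finset.univ : Finset (Fin n → Bool)) P (Finset.mem_univ vh)
    rw [hP1] at this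
    linarith [hP0 vh]
  have hfactor : 0 < Real.exp (S vh) := Real.exp_pos _
  have hrest' : ∑ v ∈ (Finset.univ : Finset (Fin n → Bool)).erase vh, Real.exp (S v) * (P v - Q v)
      ≤ Real.exp (S vh) * (ε / 2) := by
    calc _ ≤ Real.exp (S vh) * (ε / 2) * ∑ v ∈ (Finset.univ : Finset (Fin n → Bool)).erase vh, P v := hrest
      _ ≤ Real.exp (S vh) * (ε / 2) * 1 := by
          apply mul_le_mul_of_nonneg_left hPsum
          positivity
      _ = Real.exp (S vh) * (ε / 2) := by ring
  have : ∑ v : Fin n → Bool, Real.exp (S v) * (P v - Q v) < 0 := by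
    rw [hsplit]
    have h1 : Real.exp (S vh) * (P vh - Q vh) = Real.exp (S vh) * (-ε) := by
      rw [hεdef]; ring
    nlinarith [hfactor, hεpos]
  exact this
end

section
/- Let Q and P be probability distributions on a finite set S with P(v) > 0 for all v, let v̂ ∈ S with 0 < Q(v̂) < 1 and P(v̂) < Q(v̂), and for λ ∈ R define P_λ(v) = (1 + e^λ 1_{v=v̂}) P(v)/(1 + e^λ P(v̂)). Then there exists λ ∈ R such that KL(Q ∣ P_λ) < KL(Q ∣ P). -/
open Finset Real

theorem exists_lambda_decreasing_KL (S : Type*) [Fintype S] [DecidableEq S]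
    (Q P : S → ℝ)
    (hQ0 : ∀ v, 0 ≤ Q v) (hQ1 : ∑ v, Q v = 1)
    (hP0 : ∀ v, 0 < P v) (hP1 : ∑ v, P v = 1)
    (vhat : S) (hQv0 : 0 < Q vhat) (hQv1 : Q vhat < 1) (hPQ : P vhat < Q vhat) :
    ∃ lam : ℝ,
      ∑ v, Q v * Real.log (Q v /
          ((1 + Real.exp lam * (if v = vhat then (1 : ℝ) else 0)) * P v /
            (1 + Real.exp lam * P vhat)))
        < ∑ v, Q v * Real.log (Q v / P v) := by
  set p := P vhat with hpdef
  set q := Q vhat with hqdef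
  have hp : 0 < p := hP0 vhat
  have hq1 : q < 1 := hQv1
  set t : ℝ := (q - p) / (p + q) with htdef
  have ht : 0 < t := div_pos (by linarith) (by linarith)
  refine ⟨Real.log t, ?_⟩
  have hexp : Real.exp (Real.log t) = t := Real.exp_log ht
  rw [hexp]
  have hB : (0:ℝ) < 1 + t * p := by positivity
  have hA : ∀ v : S, (0:ℝ) < 1 + t * (if v = vhat then (1:ℝ) else 0) := by
    intro v
    by_cases h : v = vhat <;> simp [h] <;> linarith
  -- pointwise rewrite
  have key : ∀ v : S,
      Q v * Real.log (Q v /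
          ((1 + t * (if v = vhat then (1 : ℝ) else 0)) * P v / (1 + t * p)))
      = Q v * Real.log (Q v / P v)
        + Q v * (Real.log (1 + t * p)
          - Real.log (1 + t * (if v = vhat then (1:ℝ) else 0))) := by
    intro v
    rcases eq_or_lt_of_le (hQ0 v) with h0 | h0
    · simp [← h0]
    · have hQne : Q v ≠ 0 := ne_of_gt h0
      have hPv := hP0 v
      rw [div_div_eq_mul_div,
        Real.log_div (ne_of_gt (mul_pos h0 hB)) (ne_of_gt (mul_pos (hA v) hPv)),
        Real.log_mul hQne (ne_of_gt hB),
        Real.log_mul (ne_of_gt (hA v)) (ne_of_gt hPv),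
        Real.log_div hQne (ne_of_gt hPv)]
      ring
  simp only [key]
  rw [Finset.sum_add_distrib]
  have hsum2 : ∑ v, Q v * (Real.log (1 + t * p)
      - Real.log (1 + t * (if v = vhat then (1:ℝ) else 0)))
      = Real.log (1 + t * p) - q * Real.log (1 + t) := by
    simp only [mul_sub]
    rw [Finset.sum_sub_distrib]
    congr 1
    · rw [← Finset.sum_mul, hQ1, one_mul]
    · rw [Finset.sum_eq_single vhat]
      · simp; exact Or.inl rfl
      · intro b _ hb; simp [hb]
      · intro h; exact absurd (Finset.mem_univ vhat) h
  rw [hsum2]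
  have h1 : Real.log (1 + t * p) ≤ t * p := by
    have := Real.log_le_sub_one_of_pos hB
    linarith
  have h2 : t / (1 + t) ≤ Real.log (1 + t) := by
    have h1t : (0:ℝ) < 1 + t := by linarith
    have := Real.log_le_sub_one_of_pos (x := 1 / (1 + t)) (by positivity)
    rw [Real.log_div one_ne_zero (ne_of_gt h1t), Real.log_one] at this
    have : 1 - 1 / (1 + t) ≤ Real.log (1 + t) := by linarith
    calc t / (1 + t) = 1 - 1 / (1 + t) := by field_simp; ring
      _ ≤ _ := this
  have h3 : t * p < q * (t / (1 + t)) := by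
    have h1t : (0:ℝ) < 1 + t := by linarith
    rw [mul_div_assoc', lt_div_iff₀ h1t]
    have hpq2 : p * (1 + t) < q := by
      have : p * (1 + t) = 2 * p * q / (p + q) := by
        rw [htdef]; field_simp; ring
      rw [this, div_lt_iff₀ (by linarith)]
      nlinarith
    nlinarith
  have h4 : Real.log (1 + t * p) - q * Real.log (1 + t) < 0 := by
    have : q * (t / (1 + t)) ≤ q * Real.log (1 + t) :=
      mul_le_mul_of_nonneg_left h2 (le_of_lt hQv0)
    linarith
  linarith
end
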